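/- Let x, y ∈ ℝ with x ≠ y, and suppose the boundary values Y₊(x) = lim_{ε→0+} Y(x + iε) and Y₊(y) = lim_{ε→0+} Y(y + iε) exist. Then the correlation kernel K_{n,N}(x, y) = e^{−N(V(x)+V(y))/2} ∑_{k=0}^{n−1} p_k(x) p_k(y) satisfies K_{n,N}(x, y) = e^{−N(V(x)+V(y))/2} · (1/(2πi(x − y))) · (0 1) Y₊(y)⁻¹ Y₊(x) (1 0)ᵀ, where (0 1) is a row vector and (1 0)ᵀ a column vector. -/

import Mathlib

open MeasureTheory

noncomputable section

/-- The weight `w(x) = e^{−N V(x)}`. -/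
def wt (V : ℝ → ℝ) (N : ℝ) (x : ℝ) : ℝ := Real.exp (-(N * V x))

/-- The Fokas–Its–Kitaev matrix `Y(z)` built from the orthonormal polynomials `p_k`
(with leading coefficients `κ_k`) for the weight `e^{−NV}`. -/
def FIK (V : ℝ → ℝ) (N : ℝ) (p : ℕ → Polynomial ℝ) (κ : ℕ → ℝ) (n : ℕ) (z : ℂ) :
    Matrix (Fin 2) (Fin 2) ℂ :=
  !![(κ n : ℂ)⁻¹ * Polynomial.aeval z (p n),
     (κ n : ℂ)⁻¹ * (2 * Real.pi * Complex.I)⁻¹ *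
       ∫ s : ℝ, (((p n).eval s * wt V N s : ℝ) : ℂ) / ((s : ℂ) - z);
     -(2 * Real.pi * Complex.I) * (κ (n - 1) : ℂ) * Polynomial.aeval z (p (n - 1)),
     -(κ (n - 1) : ℂ) * ∫ s : ℝ, (((p (n - 1)).eval s * wt V N s : ℝ) : ℂ) / ((s : ℂ) - z)]


section AUX
open Polynomial
lemma wt_cont {V : ℝ → ℝ} (hV : Continuous V) (N : ℝ) : Continuous (wt V N) := by
  unfold wt; fun_prop

lemma wt_pos (V : ℝ → ℝ) (N : ℝ) (x : ℝ) : 0 < wt V N x := Real.exp_pos _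

lemma integrable_poly_mul_wt {V : ℝ → ℝ} (hV : Continuous V)
    (hgrowth : Filter.Tendsto (fun x : ℝ => V x / Real.log (x ^ 2 + 1))
      (Filter.cocompact ℝ) Filter.atTop)
    {N : ℝ} (hN : 0 < N) (q : Polynomial ℝ) :
    Integrable (fun s => q.eval s * wt V N s) := by
  set d := q.natDegree with hd
  set C₀ : ℝ := ∑ i ∈ Finset.range (d+1), |q.coeff i| with hC₀
  have hC₀nn : 0 ≤ C₀ := Finset.sum_nonneg fun i _ => abs_nonneg _
  -- bound on |q.eval s|
  have hqb : ∀ s : ℝ, |q.eval s| ≤ C₀ * (s^2+1)^(d+3) := by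
    intro s
    have h1 : (1:ℝ) ≤ s^2+1 := by nlinarith [sq_nonneg s]
    have h2 : |s| ≤ s^2+1 := by
      rcases le_or_gt (|s|) 1 with h | h
      · linarith
      · nlinarith [sq_abs s]
    rw [Polynomial.eval_eq_sum_range]
    calc |∑ i ∈ Finset.range (d+1), q.coeff i * s ^ i|
        ≤ ∑ i ∈ Finset.range (d+1), |q.coeff i * s ^ i| := Finset.abs_sum_le_sum_abs _ _
      _ ≤ ∑ i ∈ Finset.range (d+1), |q.coeff i| * (s^2+1)^(d+3) := by
          apply Finset.sum_le_sum
          intro i hi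
          rw [abs_mul, abs_pow]
          apply mul_le_mul_of_nonneg_left _ (abs_nonneg _)
          calc |s| ^ i ≤ (s^2+1)^i := pow_le_pow_left₀ (abs_nonneg _) h2 i
            _ ≤ (s^2+1)^(d+3) := pow_le_pow_right₀ h1 (by
                have := Finset.mem_range.mp hi; omega)
      _ = C₀ * (s^2+1)^(d+3) := by rw [← Finset.sum_mul]
  -- growth: eventually V x ≥ ((d+4)/N) log(x^2+1)
  have hev : ∀ᶠ x : ℝ in Filter.cocompact ℝ, ((d:ℝ)+4)/N ≤ V x / Real.log (x^2+1) :=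
    hgrowth.eventually_ge_atTop _
  rw [cocompact_eq_atBot_atTop] at hev
  obtain ⟨hbot, htop⟩ := Filter.eventually_sup.mp hev
  obtain ⟨R₁, hR₁⟩ := Filter.eventually_atTop.mp htop
  obtain ⟨R₂, hR₂⟩ := Filter.eventually_atBot.mp hbot
  set R : ℝ := max (max R₁ (-R₂)) 2 with hR
  have hR2 : (2:ℝ) ≤ R := le_max_right _ _
  -- pointwise bound outside [-R,R]
  have key : ∀ s : ℝ, R ≤ |s| → |q.eval s * wt V N s| ≤ C₀ * (1+s^2)⁻¹ := by
    intro s hs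
    have hs2 : (2:ℝ) ≤ |s| := le_trans hR2 hs
    have hs1 : (1:ℝ) < s^2 + 1 := by nlinarith [sq_abs s, abs_nonneg s]
    have hlog : 0 < Real.log (s^2+1) := Real.log_pos hs1
    have hVs : ((d:ℝ)+4)/N ≤ V s / Real.log (s^2+1) := by
      rcases le_or_gt 0 s with h | h
      · have : R₁ ≤ s := le_trans (le_trans (le_max_left _ _) (le_max_left _ _)) (by rwa [abs_of_nonneg h] at hs)
        exact hR₁ s this
      · have : s ≤ R₂ := by
          have h2 : -R₂ ≤ R := le_trans (le_max_right _ _) (le_max_left _ _)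
          rw [abs_of_neg h] at hs; linarith
        exact hR₂ s this
    have hV' : ((d:ℝ)+4) * Real.log (s^2+1) ≤ N * V s := by
      rw [div_le_div_iff₀ hN hlog] at hVs
      linarith
    have hwt : wt V N s ≤ (s^2+1)^(-((d:ℝ)+4)) := by
      unfold wt
      rw [← Real.exp_log (x := (s^2+1)^(-((d:ℝ)+4))) (Real.rpow_pos_of_pos (by linarith) _),
        Real.log_rpow (by linarith)]
      exact Real.exp_le_exp.mpr (by linarith)
    have hrw : (s^2+1:ℝ)^(-((d:ℝ)+4)) = ((s^2+1)^(d+4:ℕ))⁻¹ := by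
      rw [← Real.rpow_natCast (s^2+1) (d+4), ← Real.rpow_neg (by positivity)]
      norm_num
    calc |q.eval s * wt V N s| = |q.eval s| * wt V N s := by
          rw [abs_mul, abs_of_pos (wt_pos V N s)]
      _ ≤ (C₀ * (s^2+1)^(d+3)) * ((s^2+1)^(d+4:ℕ))⁻¹ := by
          apply mul_le_mul (hqb s) (by rw [← hrw]; exact hwt) (le_of_lt (wt_pos V N s)) (by positivity)
      _ = C₀ * ((s^2+1)^(d+3) * ((s^2+1)^(d+4:ℕ))⁻¹) := by ring
      _ ≤ C₀ * (1+s^2)⁻¹ := by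
          apply mul_le_mul_of_nonneg_left _ hC₀nn
          have h0 : (s^2+1:ℝ) ≠ 0 := by positivity
          have : (s^2+1:ℝ)^(d+3) * ((s^2+1)^(d+4:ℕ))⁻¹ = (1+s^2)⁻¹ := by
            field_simp
            ring
          rw [this]
  -- continuity
  have hcont : Continuous (fun s => q.eval s * wt V N s) :=
    (q.continuous_aeval).mul (wt_cont hV N)
  -- integrable on Icc
  have h1 : IntegrableOn (fun s => q.eval s * wt V N s) (Set.Icc (-R) R) :=
    hcont.integrableOn_Icc
  -- integrable on complement
  have h2 : IntegrableOn (fun s => q.eval s * wt V N s) (Set.Icc (-R) R)ᶜ := by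
    have hint : Integrable (fun s : ℝ => C₀ * (1+s^2)⁻¹) := integrable_inv_one_add_sq.const_mul C₀
    apply Integrable.mono' hint.integrableOn hcont.aestronglyMeasurable.restrict
    rw [ae_restrict_iff' measurableSet_Icc.compl]
    filter_upwards with s hs
    rw [Set.mem_compl_iff, Set.mem_Icc, not_and_or, not_le, not_le] at hs
    have : R ≤ |s| := by
      rcases hs with h | h
      · rw [abs_of_neg (by linarith)]; linarith
      · rw [abs_of_pos (by linarith)]; linarith
    simpa [Real.norm_eq_abs, abs_mul] using key s this
  have := h1.union h2
  rwa [Set.union_compl_self, integrableOn_univ] at this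

section OP
variable {V : ℝ → ℝ} {N : ℝ} (hV : Continuous V)
  (hgrowth : Filter.Tendsto (fun x : ℝ => V x / Real.log (x ^ 2 + 1))
      (Filter.cocompact ℝ) Filter.atTop)
  (hN : 0 < N)
  (p : ℕ → Polynomial ℝ) (κ : ℕ → ℝ)
  (hdeg : ∀ k, (p k).natDegree = k)
  (hκpos : ∀ k, 0 < κ k)
  (hlead : ∀ k, (p k).leadingCoeff = κ k)
  (horth : ∀ j k, (∫ x : ℝ, (p j).eval x * (p k).eval x * wt V N x)
      = if j = k then 1 else 0)

include hV hgrowth hN in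
lemma Int2 (q r : Polynomial ℝ) :
    Integrable (fun s => q.eval s * r.eval s * wt V N s) := by
  refine (integrable_poly_mul_wt hV hgrowth hN (q * r)).congr ?_
  filter_upwards with s
  simp [mul_assoc]

include hV hgrowth hN horth in
lemma innerSumWt (c : ℕ → ℝ) (m j : ℕ) :
    ∫ s, (∑ i ∈ Finset.range m, Polynomial.C (c i) * p i).eval s * (p j).eval s * wt V N s
      = if j < m then c j else 0 := by
  have h1 : (fun s => (∑ i ∈ Finset.range m, Polynomial.C (c i) * p i).eval s * (p j).eval s * wt V N s)
      = fun s => ∑ i ∈ Finset.range m, c i * ((p i).eval s * (p j).eval s * wt V N s) := by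
    funext s
    rw [Polynomial.eval_finset_sum, Finset.sum_mul, Finset.sum_mul]
    refine Finset.sum_congr rfl fun i _ => ?_
    simp; ring
  rw [h1, integral_finset_sum _ (fun i _ => (Int2 hV hgrowth hN (p i) (p j)).const_mul (c i))]
  have h2 : ∀ i ∈ Finset.range m, (∫ s, c i * ((p i).eval s * (p j).eval s * wt V N s))
      = if i = j then c i else 0 := by
    intro i _
    rw [integral_const_mul, horth i j]
    split <;> simp
  rw [Finset.sum_congr rfl h2, Finset.sum_ite_eq' (Finset.range m) j c]
  simp [Finset.mem_range]

include hV hgrowth hN hdeg hκpos hlead horth in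
lemma expand : ∀ m : ℕ, ∀ q : Polynomial ℝ, q.natDegree ≤ m →
    q = ∑ j ∈ Finset.range (m+1),
      Polynomial.C (∫ s, q.eval s * (p j).eval s * wt V N s) * p j := by
  have hco : ∀ k, (p k).coeff k = κ k := by
    intro k
    have := Polynomial.coeff_natDegree (p := p k)
    rw [hdeg k] at this
    rw [this, hlead k]
  have hp0 : p 0 = Polynomial.C (κ 0) := by
    have h := Polynomial.eq_C_of_natDegree_le_zero (le_of_eq (hdeg 0))
    rw [h, hco 0]
  intro m
  induction m with
  | zero =>
    intro q hq
    have hq0 : q = Polynomial.C (q.coeff 0) := Polynomial.eq_C_of_natDegree_le_zero hq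
    have hw : κ 0 * (κ 0 * ∫ s, wt V N s) = 1 := by
      have h := horth 0 0
      simp only [hp0, Polynomial.eval_C, if_true, eq_self_iff_true] at h
      rw [← h, ← integral_const_mul, ← integral_const_mul]
      congr 1; funext s; ring
    have hint : (∫ s, q.eval s * (p 0).eval s * wt V N s)
        = q.coeff 0 * κ 0 * ∫ s, wt V N s := by
      rw [← integral_const_mul]
      congr 1; funext s
      conv_lhs => rw [hq0]
      first
      | (simp [hp0]; ring)
      | simp [hp0]
    rw [Finset.sum_range_one, hint, hp0, ← Polynomial.C_mul]
    conv_lhs => rw [hq0]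
    congr 1
    linear_combination (-(q.coeff 0)) * hw
  | succ m ih =>
    intro q hq
    set c : ℝ := q.coeff (m+1) / κ (m+1) with hc
    set r : Polynomial ℝ := q - Polynomial.C c * p (m+1) with hr
    have hqr : q = r + Polynomial.C c * p (m+1) := by rw [hr]; ring
    have hrdeg : r.natDegree ≤ m := by
      rw [Polynomial.natDegree_le_iff_coeff_eq_zero]
      intro M hM
      rcases eq_or_lt_of_le (Nat.succ_le_of_lt hM) with h | h
      · rw [hr]
        simp only [Polynomial.coeff_sub, Polynomial.coeff_C_mul, ← h, hco (m+1), hc]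
        rw [div_mul_cancel₀ _ (hκpos (m+1)).ne', sub_self]
      · rw [hr]
        have h1 : q.coeff M = 0 := Polynomial.coeff_eq_zero_of_natDegree_lt (lt_of_le_of_lt hq h)
        have h2 : (p (m+1)).coeff M = 0 :=
          Polynomial.coeff_eq_zero_of_natDegree_lt (by rw [hdeg]; exact h)
        simp [h1, h2]
    have hre := ih r hrdeg
    have hsplit : ∀ j, (∫ s, q.eval s * (p j).eval s * wt V N s)
        = (∫ s, r.eval s * (p j).eval s * wt V N s) + c * (if m+1 = j then 1 else 0) := by
      intro j
      rw [← horth (m+1) j]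
      rw [← integral_const_mul,
        ← integral_add (Int2 hV hgrowth hN r (p j))
          ((Int2 hV hgrowth hN (p (m+1)) (p j)).const_mul c)]
      congr 1; funext s
      conv_lhs => rw [hqr]
      simp; ring
    -- inner r (p (m+1)) = 0
    have hr0 : (∫ s, r.eval s * (p (m+1)).eval s * wt V N s) = 0 := by
      conv_lhs => rw [hre]
      rw [innerSumWt hV hgrowth hN p horth _ (m+1) (m+1)]
      simp
    rw [Finset.sum_range_succ]
    have hstep : ∀ j ∈ Finset.range (m+1),
        Polynomial.C (∫ s, q.eval s * (p j).eval s * wt V N s) * p j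
        = Polynomial.C (∫ s, r.eval s * (p j).eval s * wt V N s) * p j := by
      intro j hj
      rw [hsplit j, if_neg (by simp at hj; omega)]
      ring_nf
    rw [Finset.sum_congr rfl hstep, ← hre, hsplit (m+1), if_pos rfl, hr0]
    rw [hqr]; ring_nf

include hV hgrowth hN hdeg hκpos hlead horth in
lemma inner_eq_zero (q : Polynomial ℝ) (j : ℕ) (h : q.natDegree < j) :
    ∫ s, q.eval s * (p j).eval s * wt V N s = 0 := by
  have h1 : q.natDegree ≤ j - 1 := by omega
  have h2 : (j - 1) + 1 = j := by omega
  conv_lhs => rw [expand hV hgrowth hN p κ hdeg hκpos hlead horth (j-1) q h1]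
  rw [h2, innerSumWt hV hgrowth hN p horth _ j j]
  rw [if_neg (by omega)]

include hV hgrowth hN hdeg hκpos hlead horth in
lemma inner_X_succ (k : ℕ) :
    ∫ s, (Polynomial.X * p k).eval s * (p (k+1)).eval s * wt V N s = κ k / κ (k+1) := by
  have hco : ∀ i, (p i).coeff i = κ i := by
    intro i
    have := Polynomial.coeff_natDegree (p := p i)
    rw [hdeg i] at this
    rw [this, hlead i]
  set a : ℝ := κ k / κ (k+1) with ha
  set r : Polynomial ℝ := Polynomial.X * p k - Polynomial.C a * p (k+1) with hr
  have hXd : (Polynomial.X * p k).natDegree ≤ k + 1 := by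
    refine le_trans (Polynomial.natDegree_mul_le) ?_
    simp only [Polynomial.natDegree_X, hdeg]
    omega
  have hrdeg : r.natDegree ≤ k := by
    rw [Polynomial.natDegree_le_iff_coeff_eq_zero]
    intro M hM
    rcases eq_or_lt_of_le (Nat.succ_le_of_lt hM) with h | h
    · rw [hr]
      simp only [Polynomial.coeff_sub, Polynomial.coeff_C_mul, ← h]
      rw [Polynomial.coeff_X_mul, hco k, hco (k+1), ha,
        div_mul_cancel₀ _ (hκpos (k+1)).ne', sub_self]
    · rw [hr]
      have h1 : (Polynomial.X * p k).coeff M = 0 :=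
        Polynomial.coeff_eq_zero_of_natDegree_lt (lt_of_le_of_lt hXd h)
      have h2 : (p (k+1)).coeff M = 0 :=
        Polynomial.coeff_eq_zero_of_natDegree_lt (by rw [hdeg]; exact h)
      simp [h1, h2]
  have hsplit : (∫ s, (Polynomial.X * p k).eval s * (p (k+1)).eval s * wt V N s)
      = (∫ s, r.eval s * (p (k+1)).eval s * wt V N s)
        + a * ∫ s, (p (k+1)).eval s * (p (k+1)).eval s * wt V N s := by
    rw [← integral_const_mul,
      ← integral_add (Int2 hV hgrowth hN r (p (k+1)))
        ((Int2 hV hgrowth hN (p (k+1)) (p (k+1))).const_mul a)]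
    congr 1; funext s
    rw [hr]; simp; ring
  rw [hsplit, horth (k+1) (k+1), if_pos rfl,
    inner_eq_zero hV hgrowth hN p κ hdeg hκpos hlead horth r (k+1) (by omega)]
  ring

include hV hgrowth hN hdeg hκpos hlead horth in
lemma recur0 : ∃ b : ℝ, Polynomial.X * p 0
    = Polynomial.C (κ 0 / κ 1) * p 1 + Polynomial.C b * p 0 := by
  set q : Polynomial ℝ := Polynomial.X * p 0 with hq
  have hqd : q.natDegree ≤ 1 := by
    refine le_trans (Polynomial.natDegree_mul_le) ?_
    simp only [Polynomial.natDegree_X, hdeg]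
    omega
  set b : ℝ := ∫ s, q.eval s * (p 0).eval s * wt V N s with hb
  refine ⟨b, ?_⟩
  have h := expand hV hgrowth hN p κ hdeg hκpos hlead horth 1 q hqd
  rw [Finset.sum_range_succ, Finset.sum_range_one] at h
  rw [inner_X_succ hV hgrowth hN p κ hdeg hκpos hlead horth 0] at h
  rw [show (0:ℕ)+1 = 1 from rfl, ← hb] at h
  rw [h]
  ring

include hV hgrowth hN hdeg hκpos hlead horth in
lemma recur (t : ℕ) : ∃ b : ℝ, Polynomial.X * p (t+1)
    = Polynomial.C (κ (t+1) / κ (t+2)) * p (t+2) + Polynomial.C b * p (t+1)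
      + Polynomial.C (κ t / κ (t+1)) * p t := by
  set q : Polynomial ℝ := Polynomial.X * p (t+1) with hq
  have hqd : q.natDegree ≤ t + 2 := by
    refine le_trans (Polynomial.natDegree_mul_le) ?_
    simp only [Polynomial.natDegree_X, hdeg]
    omega
  set b : ℝ := ∫ s, q.eval s * (p (t+1)).eval s * wt V N s with hb
  refine ⟨b, ?_⟩
  have h := expand hV hgrowth hN p κ hdeg hκpos hlead horth (t+2) q hqd
  rw [Finset.sum_range_succ, Finset.sum_range_succ, Finset.sum_range_succ] at h
  have hz : ∀ j ∈ Finset.range t,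
      Polynomial.C (∫ s, q.eval s * (p j).eval s * wt V N s) * p j = 0 := by
    intro j hj
    simp only [Finset.mem_range] at hj
    have : (∫ s, q.eval s * (p j).eval s * wt V N s) = 0 := by
      have hcomm : (∫ s, q.eval s * (p j).eval s * wt V N s)
          = ∫ s, (Polynomial.X * p j).eval s * (p (t+1)).eval s * wt V N s := by
        congr 1; funext s; rw [hq]
        simp only [Polynomial.eval_mul, Polynomial.eval_X]; ring
      rw [hcomm]
      have hdj : (Polynomial.X * p j).natDegree < t + 1 := by
        have h3 := Polynomial.natDegree_mul_le (p := (Polynomial.X : Polynomial ℝ)) (q := p j)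
        simp only [Polynomial.natDegree_X, hdeg] at h3
        omega
      exact inner_eq_zero hV hgrowth hN p κ hdeg hκpos hlead horth _ _ hdj
    rw [this]; simp
  rw [Finset.sum_congr rfl hz, Finset.sum_const_zero, zero_add] at h
  have ht : (∫ s, q.eval s * (p t).eval s * wt V N s) = κ t / κ (t+1) := by
    have hcomm : (∫ s, q.eval s * (p t).eval s * wt V N s)
        = ∫ s, (Polynomial.X * p t).eval s * (p (t+1)).eval s * wt V N s := by
      congr 1; funext s; rw [hq]
      simp only [Polynomial.eval_mul, Polynomial.eval_X]; ring
    rw [hcomm]; exact inner_X_succ hV hgrowth hN p κ hdeg hκpos hlead horth t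
  rw [ht, inner_X_succ hV hgrowth hN p κ hdeg hκpos hlead horth (t+1)] at h
  rw [show t+1+1 = t+2 from rfl, ← hb] at h
  rw [h]
  ring

include hV hgrowth hN hdeg hκpos hlead horth in
lemma CD (n : ℕ) (hn : 1 ≤ n) (x y : ℝ) :
    (x - y) * ∑ k ∈ Finset.range n, (p k).eval x * (p k).eval y
      = (κ (n-1) / κ n) * ((p n).eval x * (p (n-1)).eval y
          - (p (n-1)).eval x * (p n).eval y) := by
  set g : ℕ → ℝ := fun j => (κ j / κ (j+1)) *
    ((p (j+1)).eval x * (p j).eval y - (p j).eval x * (p (j+1)).eval y) with hg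
  set f : ℕ → ℝ := fun j => match j with | 0 => 0 | Nat.succ i => g i with hf
  have hstep : ∀ k, (x - y) * ((p k).eval x * (p k).eval y) = f (k+1) - f k := by
    intro k
    match k with
    | 0 =>
      obtain ⟨b, hb⟩ := recur0 hV hgrowth hN p κ hdeg hκpos hlead horth
      have ex := congrArg (Polynomial.eval x) hb
      have ey := congrArg (Polynomial.eval y) hb
      simp only [Polynomial.eval_mul, Polynomial.eval_add, Polynomial.eval_C,
        Polynomial.eval_X] at ex ey
      show (x - y) * ((p 0).eval x * (p 0).eval y) = g 0 - 0
      rw [hg]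
      linear_combination (p 0).eval y * ex - (p 0).eval x * ey
    | Nat.succ t =>
      obtain ⟨b, hb⟩ := recur hV hgrowth hN p κ hdeg hκpos hlead horth t
      have ex := congrArg (Polynomial.eval x) hb
      have ey := congrArg (Polynomial.eval y) hb
      simp only [Polynomial.eval_mul, Polynomial.eval_add, Polynomial.eval_C,
        Polynomial.eval_X] at ex ey
      show (x - y) * ((p (t+1)).eval x * (p (t+1)).eval y) = g (t+1) - g t
      rw [hg]
      simp only []
      linear_combination (p (t+1)).eval y * ex - (p (t+1)).eval x * ey
  calc (x - y) * ∑ k ∈ Finset.range n, (p k).eval x * (p k).eval y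
      = ∑ k ∈ Finset.range n, (x - y) * ((p k).eval x * (p k).eval y) := by
        rw [Finset.mul_sum]
    _ = ∑ k ∈ Finset.range n, (f (k+1) - f k) := Finset.sum_congr rfl fun k _ => hstep k
    _ = f n - f 0 := Finset.sum_range_sub f n
    _ = g (n-1) := by
        obtain ⟨t, rfl⟩ : ∃ t, n = t + 1 := ⟨n-1, by omega⟩
        simp [hf]
    _ = (κ (n-1) / κ n) * ((p n).eval x * (p (n-1)).eval y
          - (p (n-1)).eval x * (p n).eval y) := by
        obtain ⟨t, rfl⟩ : ∃ t, n = t + 1 := ⟨n-1, by omega⟩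
        simp [hg]

include hV hgrowth hN hdeg hκpos hlead horth in
lemma CD_complex (n : ℕ) (hn : 1 ≤ n) (s : ℝ) (z : ℂ) :
    ((s:ℂ) - z) * ∑ k ∈ Finset.range n, (((p k).eval s : ℝ) : ℂ) * Polynomial.aeval z (p k)
      = ((κ (n-1) / κ n : ℝ) : ℂ) * ((((p n).eval s : ℝ) : ℂ) * Polynomial.aeval z (p (n-1))
          - (((p (n-1)).eval s : ℝ) : ℂ) * Polynomial.aeval z (p n)) := by
  have hpoly : (Polynomial.C s - Polynomial.X)
        * ∑ k ∈ Finset.range n, Polynomial.C ((p k).eval s) * p k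
      = Polynomial.C (κ (n-1)/κ n) * (Polynomial.C ((p n).eval s) * p (n-1)
        - Polynomial.C ((p (n-1)).eval s) * p n) := by
    apply Polynomial.funext
    intro r
    have h := CD hV hgrowth hN p κ hdeg hκpos hlead horth n hn s r
    simp only [Polynomial.eval_mul, Polynomial.eval_sub, Polynomial.eval_C,
      Polynomial.eval_X, Polynomial.eval_finset_sum]
    linear_combination h
  have h2 := congrArg (Polynomial.aeval z) hpoly
  simp only [map_mul, map_sub, map_sum, Polynomial.aeval_C, Polynomial.aeval_X,
    Complex.coe_algebraMap] at h2
  exact h2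

include hV hgrowth hN hdeg hκpos hlead horth in
lemma int_pk_w (k : ℕ) :
    (∫ s, (p k).eval s * wt V N s) = if k = 0 then (κ 0)⁻¹ else 0 := by
  have hco : (p 0).coeff 0 = κ 0 := by
    have := Polynomial.coeff_natDegree (p := p 0)
    rw [hdeg 0] at this
    rw [this, hlead 0]
  have hp0 : p 0 = Polynomial.C (κ 0) := by
    have h := Polynomial.eq_C_of_natDegree_le_zero (le_of_eq (hdeg 0))
    rw [h, hco]
  have h := horth k 0
  rw [hp0] at h
  simp only [Polynomial.eval_C] at h
  have h2 : (∫ s, (p k).eval s * κ 0 * wt V N s)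
      = κ 0 * ∫ s, (p k).eval s * wt V N s := by
    rw [← integral_const_mul]
    congr 1; funext s; ring
  rw [h2] at h
  have hκ := (hκpos 0).ne'
  rcases eq_or_ne k 0 with rfl | hk
  · rw [if_pos rfl]
    rw [if_pos rfl] at h
    field_simp at h ⊢
    linarith [h]
  · rw [if_neg hk]
    rw [if_neg hk] at h
    exact (mul_eq_zero.mp h).resolve_left hκ

include hV hgrowth hN in
lemma integrable_cauchy (q : Polynomial ℝ) (z : ℂ) (hz : z.im ≠ 0) :
    Integrable (fun s : ℝ => ((q.eval s * wt V N s : ℝ) : ℂ) / ((s:ℂ) - z)) := by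
  have hne : ∀ s : ℝ, (s:ℂ) - z ≠ 0 := by
    intro s hzz
    apply hz
    have h := congrArg Complex.im hzz
    simpa using h.symm
  have hwc : Continuous (wt V N) := by unfold wt; fun_prop
  have hcont : Continuous (fun s : ℝ => ((q.eval s * wt V N s : ℝ) : ℂ) / ((s:ℂ) - z)) := by
    apply Continuous.div
    · exact Complex.continuous_ofReal.comp ((q.continuous_aeval).mul hwc)
    · fun_prop
    · exact hne
  have him : 0 < |z.im| := abs_pos.mpr hz
  refine Integrable.mono'
    (((integrable_poly_mul_wt hV hgrowth hN q).abs).mul_const (|z.im|)⁻¹)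
    hcont.aestronglyMeasurable ?_
  filter_upwards with s
  rw [norm_div]
  have h1 : |z.im| ≤ ‖(s:ℂ) - z‖ := by
    calc |z.im| = |((s:ℂ) - z).im| := by simp
      _ ≤ ‖(s:ℂ) - z‖ := Complex.abs_im_le_norm _
      _ = ‖(s:ℂ) - z‖ := rfl
  have h2 : ‖(((q.eval s * wt V N s : ℝ)) : ℂ)‖ = |q.eval s * wt V N s| := by
    rw [Complex.norm_real, Real.norm_eq_abs]
  rw [h2]
  rw [div_le_iff₀ (lt_of_lt_of_le him h1)]
  calc |q.eval s * wt V N s| = |q.eval s * wt V N s| * (|z.im|⁻¹ * |z.im|) := by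
        rw [inv_mul_cancel₀ him.ne', mul_one]
    _ ≤ |q.eval s * wt V N s| * |z.im|⁻¹ * ‖(s:ℂ) - z‖ := by
        rw [mul_assoc]
        apply mul_le_mul_of_nonneg_left _ (abs_nonneg _)
        exact mul_le_mul_of_nonneg_left h1 (by positivity)

include hV hgrowth hN hdeg hκpos hlead horth in
lemma det_FIK (n : ℕ) (hn : 1 ≤ n) (z : ℂ) (hz : z.im ≠ 0) :
    (FIK V N p κ n z).det = 1 := by
  obtain ⟨t, rfl⟩ : ∃ t, n = t + 1 := ⟨n-1, by omega⟩
  have hts : t + 1 - 1 = t := rfl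
  have hne : ∀ s : ℝ, (s:ℂ) - z ≠ 0 := by
    intro s hzz
    apply hz
    have h := congrArg Complex.im hzz
    simpa using h.symm
  have h2πi : (2 * (Real.pi:ℂ) * Complex.I) ≠ 0 :=
    mul_ne_zero (mul_ne_zero two_ne_zero (Complex.ofReal_ne_zero.mpr Real.pi_ne_zero))
      Complex.I_ne_zero
  have hκne : ∀ k, (κ k : ℂ) ≠ 0 := fun k => Complex.ofReal_ne_zero.mpr (hκpos k).ne'
  set I₁ : ℂ := ∫ s : ℝ, (((p (t+1)).eval s * wt V N s : ℝ) : ℂ) / ((s : ℂ) - z) with hI₁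
  set I₂ : ℂ := ∫ s : ℝ, (((p t).eval s * wt V N s : ℝ) : ℂ) / ((s : ℂ) - z) with hI₂
  rw [FIK, hts, Matrix.det_fin_two_of]
  have hstep1 : (κ (t+1) : ℂ)⁻¹ * Polynomial.aeval z (p (t+1))
        * (-(κ t : ℂ) * I₂)
      - (κ (t+1) : ℂ)⁻¹ * (2 * Real.pi * Complex.I)⁻¹ * I₁
        * (-(2 * Real.pi * Complex.I) * (κ t : ℂ) * Polynomial.aeval z (p t))
      = ((κ t / κ (t+1) : ℝ) : ℂ)
        * (Polynomial.aeval z (p t) * I₁ - Polynomial.aeval z (p (t+1)) * I₂) := by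
    have hinv : (2 * (Real.pi:ℂ) * Complex.I)⁻¹ * (2 * (Real.pi:ℂ) * Complex.I) = 1 :=
      inv_mul_cancel₀ h2πi
    push_cast
    linear_combination ((κ t : ℂ) * ((κ (t+1) : ℂ))⁻¹ * I₁ * Polynomial.aeval z (p t)) * hinv
  rw [hstep1]
  -- combine into a single integral
  have hcomb : Polynomial.aeval z (p t) * I₁ - Polynomial.aeval z (p (t+1)) * I₂
      = ∫ s : ℝ, (Polynomial.aeval z (p t) * ((((p (t+1)).eval s * wt V N s : ℝ) : ℂ) / ((s : ℂ) - z))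
          - Polynomial.aeval z (p (t+1)) * ((((p t).eval s * wt V N s : ℝ) : ℂ) / ((s : ℂ) - z))) := by
    rw [integral_sub ((integrable_cauchy hV hgrowth hN (p (t+1)) z hz).const_mul _)
      ((integrable_cauchy hV hgrowth hN (p t) z hz).const_mul _),
      integral_const_mul, integral_const_mul]
  rw [hcomb, ← integral_const_mul]
  -- pointwise identity via complex CD
  have hpt : ∀ s : ℝ,
      ((κ t / κ (t+1) : ℝ) : ℂ) * (Polynomial.aeval z (p t) * ((((p (t+1)).eval s * wt V N s : ℝ) : ℂ) / ((s : ℂ) - z))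
          - Polynomial.aeval z (p (t+1)) * ((((p t).eval s * wt V N s : ℝ) : ℂ) / ((s : ℂ) - z)))
      = ∑ k ∈ Finset.range (t+1), (((p k).eval s * wt V N s : ℝ) : ℂ) * Polynomial.aeval z (p k) := by
    intro s
    have hcd := CD_complex hV hgrowth hN p κ hdeg hκpos hlead horth (t+1) (by omega) s z
    rw [hts] at hcd
    have hsz := hne s
    have key : (((κ t : ℝ) : ℂ) / ((κ (t+1) : ℝ) : ℂ)) * ((((p (t+1)).eval s : ℝ) : ℂ) * Polynomial.aeval z (p t)
          - (((p t).eval s : ℝ) : ℂ) * Polynomial.aeval z (p (t+1)))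
        = ((s:ℂ) - z) * ∑ k ∈ Finset.range (t+1), (((p k).eval s : ℝ) : ℂ) * Polynomial.aeval z (p k) := by
      push_cast at hcd ⊢
      linear_combination -hcd
    have hsum : ∑ k ∈ Finset.range (t+1), (((p k).eval s * wt V N s : ℝ) : ℂ) * Polynomial.aeval z (p k)
        = ((wt V N s : ℝ) : ℂ) * ∑ k ∈ Finset.range (t+1), (((p k).eval s : ℝ) : ℂ) * Polynomial.aeval z (p k) := by
      rw [Finset.mul_sum]
      refine Finset.sum_congr rfl fun k _ => ?_
      push_cast
      ring
    rw [hsum]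
    have hu : (((s:ℂ) - z))⁻¹ * ((s:ℂ) - z) = 1 := inv_mul_cancel₀ hsz
    push_cast
    linear_combination (((wt V N s : ℝ) : ℂ) * (((s:ℂ) - z))⁻¹) * key
      + (((wt V N s : ℝ) : ℂ) * ∑ k ∈ Finset.range (t+1), (((p k).eval s : ℝ) : ℂ) * Polynomial.aeval z (p k)) * hu
  rw [MeasureTheory.integral_congr_ae (Filter.Eventually.of_forall hpt)]
  -- integrate term by term
  have hIcast : ∀ k : ℕ, (((∫ s, (p k).eval s * wt V N s : ℝ)) : ℂ)
      = ∫ s, (((p k).eval s * wt V N s : ℝ) : ℂ) := fun k => (integral_ofReal).symm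
  have hintg : ∀ k : ℕ, Integrable (fun s : ℝ =>
      (((p k).eval s * wt V N s : ℝ) : ℂ) * Polynomial.aeval z (p k)) := by
    intro k
    exact (Integrable.ofReal (integrable_poly_mul_wt hV hgrowth hN (p k))).mul_const _
  have hintk : ∀ k ∈ Finset.range (t+1),
      (∫ s : ℝ, (((p k).eval s * wt V N s : ℝ) : ℂ) * Polynomial.aeval z (p k))
      = (((if k = 0 then (κ 0)⁻¹ else 0 : ℝ)) : ℂ) * Polynomial.aeval z (p k) := by
    intro k _
    rw [← int_pk_w hV hgrowth hN p κ hdeg hκpos hlead horth k, hIcast k,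
      ← integral_mul_const]
  rw [integral_finset_sum _ (fun k _ => hintg k)]
  rw [Finset.sum_congr rfl hintk]
  rw [Finset.sum_eq_single 0]
  · have hco : (p 0).coeff 0 = κ 0 := by
      have h := Polynomial.coeff_natDegree (p := p 0)
      rw [hdeg 0] at h
      rw [h, hlead 0]
    have hp0 : p 0 = Polynomial.C (κ 0) := by
      have h := Polynomial.eq_C_of_natDegree_le_zero (le_of_eq (hdeg 0))
      rw [h, hco]
    rw [if_pos rfl, hp0]
    simp [Polynomial.aeval_C]
    exact inv_mul_cancel₀ (hκne 0)
  · intro k _ hk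
    rw [if_neg hk]
    simp
  · intro h
    simp at h
end OP

end AUX

/-- If the boundary values `Y₊(x)`, `Y₊(y)` of the Fokas–Its–Kitaev matrix
exist at real points `x ≠ y`, then the correlation kernel
`K_{n,N}(x,y) = e^{−N(V(x)+V(y))/2} ∑_{k<n} p_k(x) p_k(y)` equals
`e^{−N(V(x)+V(y))/2} (2πi(x−y))⁻¹ (0 1) Y₊(y)⁻¹ Y₊(x) (1 0)ᵀ`. -/
theorem kernel_via_FIK
    (V : ℝ → ℝ) (hV : Continuous V)
    (hgrowth : Filter.Tendsto (fun x : ℝ => V x / Real.log (x ^ 2 + 1))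
      (Filter.cocompact ℝ) Filter.atTop)
    (N : ℝ) (hN : 0 < N)
    (p : ℕ → Polynomial ℝ) (κ : ℕ → ℝ)
    (hdeg : ∀ k, (p k).natDegree = k)
    (hκpos : ∀ k, 0 < κ k)
    (hlead : ∀ k, (p k).leadingCoeff = κ k)
    (horth : ∀ j k, (∫ x : ℝ, (p j).eval x * (p k).eval x * wt V N x)
      = if j = k then 1 else 0)
    (n : ℕ) (hn : 1 ≤ n)
    (x y : ℝ) (hxy : x ≠ y)
    (Yx Yy : Matrix (Fin 2) (Fin 2) ℂ)
    (hYx : Filter.Tendsto (fun ε : ℝ => FIK V N p κ n ((x : ℂ) + ε * Complex.I))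
      (nhdsWithin 0 (Set.Ioi 0)) (nhds Yx))
    (hYy : Filter.Tendsto (fun ε : ℝ => FIK V N p κ n ((y : ℂ) + ε * Complex.I))
      (nhdsWithin 0 (Set.Ioi 0)) (nhds Yy)) :
    ((Real.exp (-(N * (V x + V y)) / 2) *
        ∑ k ∈ Finset.range n, (p k).eval x * (p k).eval y : ℝ) : ℂ)
      = (Real.exp (-(N * (V x + V y)) / 2) : ℝ) *
          (1 / (2 * Real.pi * Complex.I * ((x : ℂ) - (y : ℂ)))) * ((Yy⁻¹ * Yx) 1 0) := by
  classical
  set l := nhdsWithin (0:ℝ) (Set.Ioi 0) with hl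
  have hpe : ∀ (a : ℝ) (q : Polynomial ℝ),
      Filter.Tendsto (fun ε : ℝ => (Polynomial.aeval ((a:ℂ) + ε*Complex.I) q : ℂ)) l
        (nhds ((q.eval a : ℝ) : ℂ)) := by
    intro a q
    have hc : Continuous (fun ε : ℝ => (Polynomial.aeval ((a:ℂ) + ε*Complex.I) q : ℂ)) :=
      (Polynomial.continuous_aeval q).comp (by fun_prop)
    have h : Filter.Tendsto (fun ε : ℝ => (Polynomial.aeval ((a:ℂ) + ε*Complex.I) q : ℂ)) l
        (nhds (Polynomial.aeval ((a:ℂ) + ((0:ℝ):ℂ)*Complex.I) q)) := by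
      rw [hl]
      exact (hc.tendsto 0).mono_left nhdsWithin_le_nhds
    have h0 : (Polynomial.aeval ((a:ℂ) + ((0:ℝ):ℂ)*Complex.I) q : ℂ) = ((q.eval a : ℝ) : ℂ) := by
      rw [show ((a:ℂ) + ((0:ℝ):ℂ)*Complex.I) = (((a:ℝ)):ℂ) by push_cast; ring]
      rw [show ((a:ℝ):ℂ) = algebraMap ℝ ℂ a from rfl, Polynomial.aeval_algebraMap_apply]
      simp
    rwa [h0] at h
  have hent : ∀ (a : ℝ) (Ya : Matrix (Fin 2) (Fin 2) ℂ),
      Filter.Tendsto (fun ε : ℝ => FIK V N p κ n ((a : ℂ) + ε * Complex.I)) l (nhds Ya) →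
      ∀ i j : Fin 2, Filter.Tendsto (fun ε : ℝ => FIK V N p κ n ((a : ℂ) + ε * Complex.I) i j)
        l (nhds (Ya i j)) := by
    intro a Ya hYa i j
    exact (((continuous_apply j).comp (continuous_apply i)).tendsto Ya).comp hYa
  have hFIK00 : ∀ w : ℂ, FIK V N p κ n w 0 0 = (κ n : ℂ)⁻¹ * Polynomial.aeval w (p n) := by
    intro w; simp [FIK]
  have hFIK10 : ∀ w : ℂ, FIK V N p κ n w 1 0
      = -(2 * Real.pi * Complex.I) * (κ (n - 1) : ℂ) * Polynomial.aeval w (p (n - 1)) := by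
    intro w; simp [FIK]
  have hx00 : Yx 0 0 = (κ n : ℂ)⁻¹ * (((p n).eval x : ℝ) : ℂ) := by
    refine tendsto_nhds_unique ?_ (tendsto_const_nhds.mul (hpe x (p n)))
    refine Filter.Tendsto.congr (fun ε => (hFIK00 _).symm) ?_
    exact hent x Yx hYx 0 0 |>.congr (fun ε => hFIK00 _) |>.congr (fun ε => (hFIK00 _).symm)
  have hx10 : Yx 1 0 = -(2 * Real.pi * Complex.I) * (κ (n - 1) : ℂ)
      * (((p (n - 1)).eval x : ℝ) : ℂ) := by
    refine tendsto_nhds_unique ?_ (tendsto_const_nhds.mul (hpe x (p (n - 1))))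
    refine Filter.Tendsto.congr (fun ε => (hFIK10 _).symm) ?_
    exact hent x Yx hYx 1 0 |>.congr (fun ε => hFIK10 _)
  have hy00 : Yy 0 0 = (κ n : ℂ)⁻¹ * (((p n).eval y : ℝ) : ℂ) := by
    refine tendsto_nhds_unique ?_ (tendsto_const_nhds.mul (hpe y (p n)))
    refine Filter.Tendsto.congr (fun ε => (hFIK00 _).symm) ?_
    exact hent y Yy hYy 0 0 |>.congr (fun ε => hFIK00 _)
  have hy10 : Yy 1 0 = -(2 * Real.pi * Complex.I) * (κ (n - 1) : ℂ)
      * (((p (n - 1)).eval y : ℝ) : ℂ) := by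
    refine tendsto_nhds_unique ?_ (tendsto_const_nhds.mul (hpe y (p (n - 1))))
    refine Filter.Tendsto.congr (fun ε => (hFIK10 _).symm) ?_
    exact hent y Yy hYy 1 0 |>.congr (fun ε => hFIK10 _)
  have hdet : Yy.det = 1 := by
    have h1 : Filter.Tendsto (fun ε : ℝ => (FIK V N p κ n ((y:ℂ) + ε*Complex.I)).det)
        l (nhds Yy.det) := by
      have h2 := ((hent y Yy hYy 0 0).mul (hent y Yy hYy 1 1)).sub
        ((hent y Yy hYy 0 1).mul (hent y Yy hYy 1 0))
      rw [← Matrix.det_fin_two Yy] at h2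
      refine Filter.Tendsto.congr (fun ε => ?_) h2
      rw [Matrix.det_fin_two]
    have h3 : Filter.Tendsto (fun ε : ℝ => (FIK V N p κ n ((y:ℂ) + ε*Complex.I)).det)
        l (nhds 1) := by
      refine Filter.Tendsto.congr' ?_ tendsto_const_nhds
      filter_upwards [self_mem_nhdsWithin] with ε hε
      refine (det_FIK hV hgrowth hN p κ hdeg hκpos hlead horth n hn _ ?_).symm
      have : ((y:ℂ) + ε * Complex.I).im = ε := by simp
      rw [this]
      exact (Set.mem_Ioi.mp hε).ne'
    exact tendsto_nhds_unique h1 h3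
  have hinv : (Yy⁻¹ * Yx) 1 0 = -(Yy 1 0) * Yx 0 0 + Yy 0 0 * Yx 1 0 := by
    rw [Matrix.inv_def, hdet, Ring.inverse_one, one_smul, Matrix.adjugate_fin_two]
    rw [Matrix.mul_apply, Fin.sum_univ_two]
    simp
  have hw : ((x:ℂ) - (y:ℂ)) ≠ 0 := sub_ne_zero.mpr (by exact_mod_cast hxy)
  have hD : (2 * (Real.pi:ℂ) * Complex.I) ≠ 0 :=
    mul_ne_zero (mul_ne_zero two_ne_zero (Complex.ofReal_ne_zero.mpr Real.pi_ne_zero))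
      Complex.I_ne_zero
  have hκn : ((κ n : ℝ):ℂ) ≠ 0 := Complex.ofReal_ne_zero.mpr (hκpos n).ne'
  have hCDr := CD hV hgrowth hN p κ hdeg hκpos hlead horth n hn x y
  have hCDc : ((x:ℂ) - y) * ((∑ k ∈ Finset.range n, (p k).eval x * (p k).eval y : ℝ) : ℂ)
      = ((κ (n-1) : ℝ):ℂ) / ((κ n : ℝ):ℂ) * ((((p n).eval x : ℝ):ℂ) * (((p (n-1)).eval y : ℝ):ℂ)
          - (((p (n-1)).eval x : ℝ):ℂ) * (((p n).eval y : ℝ):ℂ)) := by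
    exact_mod_cast hCDr
  have hentry : ((Yy⁻¹ * Yx) 1 0)
      = 2 * Real.pi * Complex.I * ((x:ℂ) - y)
        * ((∑ k ∈ Finset.range n, (p k).eval x * (p k).eval y : ℝ) : ℂ) := by
    rw [hinv, hx00, hx10, hy00, hy10]
    linear_combination (-(2 * (Real.pi:ℂ) * Complex.I)) * hCDc
  rw [hentry]
  push_cast
  field_simp

end
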